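/- arXiv:1601.02987 — 2 statements merged into one kernel-verified Lean document; each statement's English description precedes it below -/
import Mathlib

section
/- Suppose a beamforming codebook covers a total beamspace Ω̄ using K beams, each beam covering a contiguous interval of length Ω₀ = Ω̄/K, with worst-case gain P within its interval. Then for a beamformer f with ‖f‖₂ ≤ 1, the worst-case beamforming gain P satisfies P ≤ min(N_t, (2π/Ω̄)·K). -/
open BigOperators Real

open Complex intervalIntegral MeasureTheory in
private lemma stmt17_aux_int (k : ℤ) (hk : k ≠ 0) :
    (∫ Ω : ℝ in (-π)..π, Complex.exp ((k : ℂ) * Ω * I)) = 0 := by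
  have hc : (k : ℂ) * I ≠ 0 := by
    simp [Complex.I_ne_zero, hk]
  have h := integral_exp_mul_complex (a := -π) (b := π) hc
  have hre : ∀ Ω : ℝ, ((k : ℂ) * I) * Ω = (k : ℂ) * Ω * I := by intro Ω; ring
  simp_rw [hre] at h
  rw [h]
  have h1 : (k : ℂ) * (π : ℂ) * I = (k : ℂ) * ((π : ℂ) * I) := by ring
  have h2 : (k : ℂ) * ((-π : ℝ) : ℂ) * I = ((-k : ℤ) : ℂ) * ((π : ℂ) * I) := by
    push_cast; ring
  rw [h1, h2, Complex.exp_int_mul, Complex.exp_int_mul, Complex.exp_pi_mul_I]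
  have : ((-1 : ℂ)) ^ (-k) = ((-1 : ℂ)) ^ k := by
    rw [zpow_neg, ← inv_zpow, inv_neg, inv_one]
  rw [this, sub_self, zero_div]

open Complex intervalIntegral MeasureTheory in
/-- Tradeoff bound: if a codebook of `K` beams covers beamspace `Ω̄` with each
beam covering an interval of length `Ω₀ = Ω̄/K` with worst-case gain `P`, then
for a beamformer `f` with `‖f‖₂ ≤ 1`, `P ≤ min(Nt, (2π/Ω̄)·K)`. -/
theorem stmt17 (Nt K : ℕ) (hK : 0 < K) (f : Fin Nt → ℂ)
    (hf : ∑ n, ‖f n‖^2 ≤ 1)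
    (Ωbar Ω₀ P a : ℝ) (hΩbar : 0 < Ωbar) (hΩ₀ : Ω₀ = Ωbar / K)
    (hsub : Set.Icc a (a + Ω₀) ⊆ Set.Icc (-π) π)
    (hgain : ∀ Ω ∈ Set.Icc a (a + Ω₀),
      P ≤ ‖∑ n : Fin Nt, f n * Complex.exp (-(Ω * n) * Complex.I)‖^2) :
    P ≤ min (Nt : ℝ) ((2 * π / Ωbar) * K) := by
  set F : ℝ → ℂ := fun Ω => ∑ n : Fin Nt, f n * Complex.exp (-(Ω * n) * Complex.I) with hF
  have hΩ₀pos : 0 < Ω₀ := by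
    rw [hΩ₀]; positivity
  have hS1 : ∑ n, Complex.normSq (f n) ≤ 1 := by
    simpa [Complex.sq_norm] using hf
  have hSnonneg : (0:ℝ) ≤ ∑ n, Complex.normSq (f n) :=
    Finset.sum_nonneg fun n _ => Complex.normSq_nonneg _
  -- continuity
  have hFcont : Continuous F := by
    apply continuous_finset_sum
    intro n _
    exact continuous_const.mul ((Complex.continuous_ofReal.mul continuous_const).neg.mul
      continuous_const).cexp
  have hgcont : Continuous fun Ω => Complex.normSq (F Ω) :=
    Complex.continuous_normSq.comp hFcont
  -- Pointwise bound: P ≤ Nt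
  have haMem : a ∈ Set.Icc a (a + Ω₀) := ⟨le_refl _, by linarith⟩
  have hPN : P ≤ (Nt : ℝ) := by
    have h1 := hgain a haMem
    have h2 : ‖F a‖ ≤ ∑ n, ‖f n‖ := by
      refine le_trans (norm_sum_le _ _) (le_of_eq ?_)
      apply Finset.sum_congr rfl
      intro n _
      rw [norm_mul, Complex.norm_exp]
      simp
    have h3 : (∑ n, ‖f n‖) ^ 2 ≤ (Nt : ℝ) * ∑ n, ‖f n‖^2 := by
      have := Finset.sum_mul_sq_le_sq_mul_sq Finset.univ
        (fun _ : Fin Nt => (1:ℝ)) (fun n => ‖f n‖)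
      simpa [Finset.card_univ, mul_comm] using this
    have h4 : ‖F a‖^2 ≤ (∑ n, ‖f n‖)^2 := by
      apply pow_le_pow_left₀ (norm_nonneg _) h2
    have h5 : (Nt : ℝ) * ∑ n, ‖f n‖^2 ≤ (Nt : ℝ) * 1 :=
      mul_le_mul_of_nonneg_left hf (Nat.cast_nonneg _)
    calc P ≤ ‖F a‖^2 := h1
      _ ≤ (∑ n, ‖f n‖)^2 := h4
      _ ≤ (Nt : ℝ) * ∑ n, ‖f n‖^2 := h3
      _ ≤ (Nt : ℝ) := by linarith
  -- Parseval
  have hortho : ∀ n m : Fin Nt,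
      (∫ Ω : ℝ in (-π)..π, Complex.exp (-((Ω:ℂ) * n) * Complex.I) *
        (starRingEnd ℂ) (Complex.exp (-((Ω:ℂ) * m) * Complex.I)))
        = if n = m then (2*π : ℂ) else 0 := by
    intro n m
    have hint : ∀ Ω : ℝ, Complex.exp (-((Ω:ℂ) * n) * Complex.I) *
        (starRingEnd ℂ) (Complex.exp (-((Ω:ℂ) * m) * Complex.I))
        = Complex.exp ((((m:ℤ) - (n:ℤ) : ℤ) : ℂ) * Ω * Complex.I) := by
      intro Ω
      rw [← Complex.exp_conj, ← Complex.exp_add]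
      congr 1
      have : (starRingEnd ℂ) (-((Ω:ℂ) * m) * Complex.I) = ((Ω:ℂ) * m) * Complex.I := by
        simp [map_mul, Complex.conj_I, Complex.conj_ofReal]
      rw [this]
      push_cast
      ring
    simp_rw [hint]
    by_cases hnm : n = m
    · subst hnm
      simp only [sub_self, Int.cast_zero, zero_mul, Complex.exp_zero, eq_self_iff_true,
        if_true]
      rw [intervalIntegral.integral_const, Complex.real_smul]
      push_cast; ring
    · have hk : ((m:ℤ) - (n:ℤ)) ≠ 0 := by
        intro h
        apply hnm
        have : (n : ℤ) = (m : ℤ) := by omega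
        exact Fin.ext (by exact_mod_cast this)
      rw [stmt17_aux_int _ hk, if_neg hnm]
  have hparse : (∫ Ω : ℝ in (-π)..π, Complex.normSq (F Ω))
      = 2 * π * ∑ n, Complex.normSq (f n) := by
    have hcast : ((∫ Ω : ℝ in (-π)..π, Complex.normSq (F Ω) : ℝ) : ℂ)
        = ∫ Ω : ℝ in (-π)..π, F Ω * (starRingEnd ℂ) (F Ω) := by
      rw [← intervalIntegral.integral_ofReal]
      congr 1
      funext Ω
      rw [Complex.mul_conj]
    have hexp : (∫ Ω : ℝ in (-π)..π, F Ω * (starRingEnd ℂ) (F Ω))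
        = 2 * π * ∑ n, (Complex.normSq (f n) : ℂ) := by
      have hrw : ∀ Ω : ℝ, F Ω * (starRingEnd ℂ) (F Ω)
          = ∑ n : Fin Nt, ∑ m : Fin Nt, (f n * (starRingEnd ℂ) (f m)) *
              (Complex.exp (-((Ω:ℂ) * n) * Complex.I) *
               (starRingEnd ℂ) (Complex.exp (-((Ω:ℂ) * m) * Complex.I))) := by
        intro Ω
        rw [hF]
        simp only [map_sum, map_mul, Finset.sum_mul_sum]
        apply Finset.sum_congr rfl; intro n _
        apply Finset.sum_congr rfl; intro m _
        ring
      simp_rw [hrw]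
      rw [intervalIntegral.integral_finset_sum]
      · have : ∀ n : Fin Nt, (∫ Ω : ℝ in (-π)..π,
            ∑ m : Fin Nt, (f n * (starRingEnd ℂ) (f m)) *
              (Complex.exp (-((Ω:ℂ) * n) * Complex.I) *
               (starRingEnd ℂ) (Complex.exp (-((Ω:ℂ) * m) * Complex.I))))
            = f n * (starRingEnd ℂ) (f n) * (2*π : ℂ) := by
          intro n
          rw [intervalIntegral.integral_finset_sum]
          · have : ∀ m : Fin Nt, (∫ Ω : ℝ in (-π)..π,
                (f n * (starRingEnd ℂ) (f m)) *
                  (Complex.exp (-((Ω:ℂ) * n) * Complex.I) *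
                   (starRingEnd ℂ) (Complex.exp (-((Ω:ℂ) * m) * Complex.I))))
                = (f n * (starRingEnd ℂ) (f m)) * (if n = m then (2*π : ℂ) else 0) := by
              intro m
              rw [intervalIntegral.integral_const_mul, hortho]
            simp_rw [this, mul_ite, mul_zero]
            rw [Finset.sum_ite_eq]
            simp
          · intro m _
            apply Continuous.intervalIntegrable
            apply continuous_const.mul
            apply Continuous.mul
            · exact ((Complex.continuous_ofReal.mul continuous_const).neg.mul
                continuous_const).cexp
            · exact Complex.continuous_conj.comp
                ((Complex.continuous_ofReal.mul continuous_const).neg.mul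
                  continuous_const).cexp
        simp_rw [this]
        rw [← Finset.sum_mul]
        simp_rw [Complex.mul_conj]
        ring
      · intro n _
        apply Continuous.intervalIntegrable
        apply continuous_finset_sum
        intro m _
        apply continuous_const.mul
        apply Continuous.mul
        · exact ((Complex.continuous_ofReal.mul continuous_const).neg.mul
            continuous_const).cexp
        · exact Complex.continuous_conj.comp
            ((Complex.continuous_ofReal.mul continuous_const).neg.mul
              continuous_const).cexp
    have := hcast.trans hexp
    have h2 : ((2 * π * ∑ n, Complex.normSq (f n) : ℝ) : ℂ)
        = 2 * π * ∑ n, (Complex.normSq (f n) : ℂ) := by push_cast; ring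
    exact_mod_cast this.trans h2.symm
  -- Integral bound: P * Ω₀ ≤ 2π * S
  have haπ : -π ≤ a := (hsub haMem).1
  have hbπ : a + Ω₀ ≤ π := (hsub ⟨by linarith, le_refl _⟩).2
  have hab : a ≤ a + Ω₀ := by linarith
  have hgi : IntervalIntegrable (fun Ω => Complex.normSq (F Ω)) volume a (a + Ω₀) :=
    hgcont.intervalIntegrable _ _
  have hgi2 : IntervalIntegrable (fun Ω => Complex.normSq (F Ω)) volume (-π) π :=
    hgcont.intervalIntegrable _ _
  have h1 : P * Ω₀ ≤ ∫ Ω in a..(a + Ω₀), Complex.normSq (F Ω) := by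
    have := intervalIntegral.integral_mono_on hab
      (_root_.intervalIntegrable_const (c := P)) hgi
      (fun x hx => by
        have := hgain x hx
        rw [Complex.sq_norm] at this
        exact this)
    simpa [mul_comm] using this
  have h2 : (∫ Ω in a..(a + Ω₀), Complex.normSq (F Ω))
      ≤ ∫ Ω in (-π)..π, Complex.normSq (F Ω) := by
    apply intervalIntegral.integral_mono_interval haπ hab hbπ
    · filter_upwards with x using Complex.normSq_nonneg _
    · exact hgi2
  have hkey : P * Ω₀ ≤ 2 * π := by
    have : P * Ω₀ ≤ 2 * π * ∑ n, Complex.normSq (f n) := by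
      rw [← hparse]; linarith
    have hπpos : (0:ℝ) < π := Real.pi_pos
    nlinarith
  have hP2 : P ≤ (2 * π / Ωbar) * K := by
    have hKpos : (0:ℝ) < K := by exact_mod_cast hK
    rw [div_mul_eq_mul_div, le_div_iff₀ hΩbar]
    have : P * Ωbar = (P * Ω₀) * K := by
      rw [hΩ₀]; field_simp
    rw [this]
    calc (P * Ω₀) * K ≤ (2 * π) * K := by
          apply mul_le_mul_of_nonneg_right hkey (le_of_lt hKpos)
      _ = 2 * π * K := by ring
  exact le_min hPN hP2
end

section
/- Let R = Σ_{k=1}^K α_k α_k^* u(φ_k) u(φ_k)^H + σ² I be an N × N covariance matrix with K < N distinct steering vectors u(φ_k) that are linearly independent. Then the eigenspace of R corresponding to the eigenvalue σ² (the noise subspace) is exactly the orthogonal complement of span{u(φ_1), …, u(φ_K)}; consequently, for any direction φ, Σ_{n=K+1}^{N} |u(φ)^H q_n|² = 0 (where q_{K+1}, …, q_N form an orthonormal basis of the noise subspace) if and only if u(φ) ∈ span{u(φ_1), …, u(φ_K)}. -/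
open BigOperators Matrix

private lemma orth_span {N : ℕ} (v : Fin N → ℂ) (s : Set (Fin N → ℂ))
    (h : ∀ y ∈ s, star y ⬝ᵥ v = 0) :
    ∀ x ∈ Submodule.span ℂ s, star x ⬝ᵥ v = 0 := by
  intro x hx
  induction hx using Submodule.span_induction with
  | mem y hy => exact h y hy
  | zero => simp
  | add a b _ _ ha hb => simp [star_add, add_dotProduct, ha, hb]
  | smul c a _ ha => simp [star_smul, smul_dotProduct, ha]

private lemma dp_self_zero {N : ℕ} {x : Fin N → ℂ} (h : star x ⬝ᵥ x = 0) : x = 0 := by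
  have h1 : ((∑ i, Complex.normSq (x i) : ℝ) : ℂ) = 0 := by
    push_cast
    simpa [dotProduct, mul_comm, Complex.mul_conj] using h
  have h2 : ∑ i, Complex.normSq (x i) = 0 := by exact_mod_cast h1
  funext i
  exact Complex.normSq_eq_zero.mp
    ((Finset.sum_eq_zero_iff_of_nonneg (fun i _ => Complex.normSq_nonneg _)).mp h2 i
      (Finset.mem_univ i))

private lemma vmv_mulVec {N : ℕ} (a b x : Fin N → ℂ) :
    (Matrix.vecMulVec a b).mulVec x = (b ⬝ᵥ x) • a := by
  funext i
  simp [Matrix.mulVec, Matrix.vecMulVec_apply, dotProduct, Finset.mul_sum,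
    mul_assoc, mul_comm, mul_left_comm]

/-- Mathematical premise of MUSIC: for the ideal covariance
`R = ∑ k |α_k|² u_k u_kᴴ + σ² I` with `K < N` linearly independent steering
vectors and nonzero gains, the `σ²`-eigenspace (noise subspace) is exactly the
orthogonal complement of `span{u_k}`; and with an orthonormal basis `q` of the
noise subspace, `∑ n |wᴴ q_n|² = 0` iff `w ∈ span{u_k}`. -/
theorem stmt18 (N K : ℕ) (hKN : K < N)
    (α : Fin K → ℂ) (hα : ∀ k, α k ≠ 0)
    (u : Fin K → Fin N → ℂ) (hu : LinearIndependent ℂ u)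
    (σ : ℝ)
    (R : Matrix (Fin N) (Fin N) ℂ)
    (hR : R = (∑ k : Fin K, (α k * star (α k)) •
        Matrix.vecMulVec (u k) (star (u k))) + ((σ^2 : ℝ) : ℂ) • (1 : Matrix (Fin N) (Fin N) ℂ))
    (q : Fin (N - K) → Fin N → ℂ)
    (hqorth : ∀ n m, star (q n) ⬝ᵥ q m = if n = m then 1 else 0)
    (hqspan : ∀ x : Fin N → ℂ,
      x ∈ Submodule.span ℂ (Set.range q) ↔ ∀ k, star (u k) ⬝ᵥ x = 0) :
    (∀ x : Fin N → ℂ,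
      R.mulVec x = ((σ^2 : ℝ) : ℂ) • x ↔ ∀ k, star (u k) ⬝ᵥ x = 0) ∧
    (∀ w : Fin N → ℂ,
      (∑ n, (‖star w ⬝ᵥ q n‖)^2 = 0) ↔
        w ∈ Submodule.span ℂ (Set.range u)) := by
  have huq : ∀ k n, star (u k) ⬝ᵥ q n = 0 := fun k n =>
    (hqspan (q n)).mp (Submodule.subset_span ⟨n, rfl⟩) k
  constructor
  · intro x
    have hcalc : R.mulVec x =
        (∑ k : Fin K, ((α k * star (α k)) * (star (u k) ⬝ᵥ x)) • u k) + ((σ^2:ℝ):ℂ) • x := by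
      subst hR
      rw [Matrix.add_mulVec, Matrix.smul_mulVec, Matrix.one_mulVec]
      congr 1
      have : (∑ k : Fin K, (α k * star (α k)) • Matrix.vecMulVec (u k) (star (u k))).mulVec x
          = ∑ k : Fin K, ((α k * star (α k)) • Matrix.vecMulVec (u k) (star (u k))).mulVec x := by
        funext i
        simp [Matrix.mulVec, dotProduct, Matrix.sum_apply, Finset.sum_mul]
        rw [Finset.sum_comm]
      rw [this]
      refine Finset.sum_congr rfl fun k _ => ?_
      rw [Matrix.smul_mulVec, vmv_mulVec, smul_smul]
    rw [hcalc, add_eq_right]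
    constructor
    · intro h k
      have := Fintype.linearIndependent_iff.mp hu _ h k
      exact (mul_eq_zero.mp this).resolve_left (mul_ne_zero (hα k) (star_ne_zero.mpr (hα k)))
    · intro h
      refine Finset.sum_eq_zero fun k _ => by rw [h k, mul_zero, zero_smul]
  · -- setup for part 2
    have hqind : LinearIndependent ℂ q := by
      rw [Fintype.linearIndependent_iff]
      intro g hg m
      have hswap : star (q m) ⬝ᵥ (∑ n, g n • q n) = ∑ n, g n * (star (q m) ⬝ᵥ q n) := by
        simp only [dotProduct, Finset.sum_apply, Pi.smul_apply, smul_eq_mul, Finset.mul_sum]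
        rw [Finset.sum_comm]
        exact Finset.sum_congr rfl fun n _ => Finset.sum_congr rfl fun i _ => by ring
      have : star (q m) ⬝ᵥ (∑ n, g n • q n) = g m := by
        rw [hswap]
        simp [hqorth, eq_comm]
      rw [hg] at this
      simpa using this.symm
    set S := Submodule.span ℂ (Set.range u) with hS
    set Q := Submodule.span ℂ (Set.range q) with hQ
    have hdisj : S ⊓ Q = ⊥ := by
      rw [Submodule.eq_bot_iff]
      intro x ⟨hxS, hxQ⟩
      have hux : ∀ k, star (u k) ⬝ᵥ x = 0 := (hqspan x).mp hxQ
      have : star x ⬝ᵥ x = 0 := by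
        refine orth_span x (Set.range u) ?_ x hxS
        rintro y ⟨k, rfl⟩; exact hux k
      exact dp_self_zero this
    have htop : S ⊔ Q = ⊤ := by
      apply Submodule.eq_top_of_finrank_eq
      have h1 : Module.finrank ℂ S = K := by simpa using finrank_span_eq_card hu
      have h2 : Module.finrank ℂ Q = N - K := by simpa using finrank_span_eq_card hqind
      have := Submodule.finrank_sup_add_finrank_inf_eq S Q
      rw [hdisj, h1, h2] at this
      simp only [finrank_bot, add_zero] at this
      rw [this, Module.finrank_fin_fun, Nat.add_sub_cancel' hKN.le]
    intro w
    constructor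
    · intro hsum0
      have hzero : ∀ n, star w ⬝ᵥ q n = 0 := by
        intro n
        have h := (Finset.sum_eq_zero_iff_of_nonneg
          (fun i _ => sq_nonneg (‖star w ⬝ᵥ q i‖))).mp hsum0 n (Finset.mem_univ n)
        have : ‖star w ⬝ᵥ q n‖ = 0 := by
          exact pow_eq_zero_iff (two_ne_zero) |>.mp h
        exact norm_eq_zero.mp this
      have hw : w ∈ S ⊔ Q := htop ▸ Submodule.mem_top
      obtain ⟨a, haS, b, hbQ, hab⟩ := Submodule.mem_sup.mp hw
      have haq : ∀ n, star a ⬝ᵥ q n = 0 := by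
        intro n
        refine orth_span (q n) (Set.range u) ?_ a haS
        rintro y ⟨k, rfl⟩; exact huq k n
      have hbq : ∀ n, star b ⬝ᵥ q n = 0 := by
        intro n
        have : star w ⬝ᵥ q n = star a ⬝ᵥ q n + star b ⬝ᵥ q n := by
          rw [← hab]; simp [star_add, add_dotProduct]
        rw [hzero n, haq n, zero_add] at this
        exact this.symm
      have hqb : ∀ n, star (q n) ⬝ᵥ b = 0 := by
        intro n
        have : star (q n) ⬝ᵥ b = starRingEnd ℂ (star b ⬝ᵥ q n) := by
          simp [dotProduct, map_sum, mul_comm]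
        rw [this, hbq n, map_zero]
      have hbb : star b ⬝ᵥ b = 0 := by
        refine orth_span b (Set.range q) ?_ b hbQ
        rintro y ⟨n, rfl⟩; exact hqb n
      have hb0 : b = 0 := dp_self_zero hbb
      rw [← hab, hb0, add_zero]
      exact haS
    · intro hw
      have hzero : ∀ n, star w ⬝ᵥ q n = 0 := by
        intro n
        refine orth_span (q n) (Set.range u) ?_ w hw
        rintro y ⟨k, rfl⟩; exact huq k n
      refine Finset.sum_eq_zero fun n _ => by rw [hzero n]; simp
end
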